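/- Let d ≥ 1 and let v ∈ ℂ^d be a unit vector that is unbiased to the Fourier basis, i.e. |⟨f_j, v⟩|² = 1/d for all j = 0,…,d−1. Then the cyclic shifts v^(0), v^(1), …, v^(d−1) of v form an orthonormal basis of ℂ^d, and every vector v^(k) of this basis is unbiased to the Fourier basis, i.e. |⟨f_j, v^(k)⟩|² = 1/d for all j and k. -/

import Mathlib

open scoped ComplexInnerProductSpace

/-- `ω d = exp(2πi/d)`, a primitive `d`-th root of unity. -/
noncomputable def omegaRoot (d : ℕ) : ℂ := Complex.exp (2 * Real.pi * Complex.I / d)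

/-- The `j`-th Fourier basis vector of `ℂ^d`, with components `ω_d^{jm}/√d`. -/
noncomputable def fourierVec (d : ℕ) (j : Fin d) : EuclideanSpace ℂ (Fin d) :=
  WithLp.toLp 2 (fun m : Fin d => omegaRoot d ^ ((j : ℕ) * (m : ℕ)) / (Real.sqrt d : ℂ))

/-- The cyclic shift `v^(k)` of `v`, with components `(v^(k))_{(m+k) mod d} = v_m`,
i.e. `(v^(k))_n = v_{(n-k) mod d}`. -/
def cyclicShift {d : ℕ} (k : Fin d) (v : EuclideanSpace ℂ (Fin d)) :
    EuclideanSpace ℂ (Fin d) :=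
  WithLp.toLp 2 (fun n => v (n - k))

section Aux

variable {d : ℕ}

lemma omega_prim (hd : 1 ≤ d) : IsPrimitiveRoot (omegaRoot d) d := by
  simpa [omegaRoot] using Complex.isPrimitiveRoot_exp d (by omega)

lemma omega_pow (hd : 1 ≤ d) : omegaRoot d ^ d = 1 := (omega_prim hd).pow_eq_one

lemma abs_omega : ‖omegaRoot d‖ = 1 := by
  have h : (2 * (Real.pi : ℂ) * Complex.I / d) = ((2 * Real.pi / d : ℝ) : ℂ) * Complex.I := by
    push_cast; ring
  rw [omegaRoot, h, Complex.norm_exp_ofReal_mul_I]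

lemma conj_mul_omega : (starRingEnd ℂ) (omegaRoot d) * omegaRoot d = 1 := by
  rw [mul_comm, Complex.mul_conj, Complex.normSq_eq_norm_sq, abs_omega]
  norm_num

lemma sum_pow_fin (d : ℕ) (ζ : ℂ) (hζ : ζ ^ d = 1) :
    ∑ m : Fin d, ζ ^ (m : ℕ) = if ζ = 1 then (d : ℂ) else 0 := by
  rw [Fin.sum_univ_eq_sum_range]
  split_ifs with h
  · simp [h]
  · rw [geom_sum_eq h, hζ]
    simp

lemma fourier_inner (d : ℕ) (j : Fin d) (x : EuclideanSpace ℂ (Fin d)) :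
    ⟪fourierVec d j, x⟫ =
      (Real.sqrt d : ℂ)⁻¹ *
        ∑ m : Fin d, ((starRingEnd ℂ) (omegaRoot d) ^ (j : ℕ)) ^ (m : ℕ) * x m := by
  rw [Finset.mul_sum]
  simp only [PiLp.inner_apply, RCLike.inner_apply]
  refine Finset.sum_congr rfl fun m _ => ?_
  have hm : (fourierVec d j) m = omegaRoot d ^ ((j : ℕ) * (m : ℕ)) / (Real.sqrt d : ℂ) := rfl
  rw [hm, map_div₀, Complex.conj_ofReal, map_pow, pow_mul, div_eq_mul_inv]
  ring

lemma conj_omega_pow_d (hd : 1 ≤ d) (j : ℕ) :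
    ((starRingEnd ℂ) (omegaRoot d) ^ j) ^ d = 1 := by
  rw [← pow_mul, mul_comm, pow_mul, ← map_pow, omega_pow hd, map_one, one_pow]

lemma fourier_inner_shift (hd : 1 ≤ d) (j k : Fin d) (v : EuclideanSpace ℂ (Fin d)) :
    ⟪fourierVec d j, cyclicShift k v⟫ =
      ((starRingEnd ℂ) (omegaRoot d) ^ (j : ℕ)) ^ (k : ℕ) * ⟪fourierVec d j, v⟫ := by
  haveI : NeZero d := ⟨by omega⟩
  set b : ℂ := (starRingEnd ℂ) (omegaRoot d) ^ (j : ℕ) with hbdef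
  have hb : b ^ d = 1 := conj_omega_pow_d hd j
  rw [fourier_inner, fourier_inner]
  have key : ∑ n : Fin d, b ^ (n : ℕ) * (cyclicShift k v) n
      = b ^ (k : ℕ) * ∑ m : Fin d, b ^ (m : ℕ) * v m := by
    rw [Finset.mul_sum]
    refine Fintype.sum_equiv (Equiv.subRight k) _ _ fun n => ?_
    show b ^ (n : ℕ) * v (n - k) = b ^ (k : ℕ) * (b ^ (((n - k : Fin d)) : ℕ) * v (n - k))
    rw [← mul_assoc, ← pow_add]
    congr 1
    conv_rhs => rw [pow_eq_pow_mod _ hb]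
    congr 1
    have h1 : (((n - k) + k : Fin d) : ℕ) = (((n - k : Fin d) : ℕ) + (k : ℕ)) % d :=
      Fin.val_add _ _
    rw [sub_add_cancel] at h1
    rw [Nat.add_comm]
    exact h1
  rw [key]
  ring

lemma fourier_orthonormal (hd : 1 ≤ d) : Orthonormal ℂ (fourierVec d) := by
  have hsd : ((Real.sqrt d : ℝ) : ℂ) * ((Real.sqrt d : ℝ) : ℂ) = (d : ℂ) := by
    norm_cast
    exact Real.mul_self_sqrt (by positivity)
  have hsne : ((Real.sqrt d : ℝ) : ℂ) ≠ 0 := by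
    simp only [ne_eq, Complex.ofReal_eq_zero]
    positivity
  rw [orthonormal_iff_ite]
  intro i j
  rw [fourier_inner]
  set ζ : ℂ := (starRingEnd ℂ) (omegaRoot d) ^ (i : ℕ) * omegaRoot d ^ (j : ℕ) with hζdef
  have hterm : ∀ m : Fin d,
      ((starRingEnd ℂ) (omegaRoot d) ^ (i : ℕ)) ^ (m : ℕ) * fourierVec d j m
        = ζ ^ (m : ℕ) * ((Real.sqrt d : ℝ) : ℂ)⁻¹ := by
    intro m
    have hm : fourierVec d j m = omegaRoot d ^ ((j : ℕ) * (m : ℕ)) / (Real.sqrt d : ℂ) := rfl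
    rw [hm, hζdef, mul_pow, ← pow_mul, ← pow_mul, mul_comm ((j : ℕ)) ((m : ℕ)), div_eq_mul_inv]
    ring
  rw [Finset.sum_congr rfl fun m _ => hterm m, ← Finset.sum_mul]
  have hζd : ζ ^ d = 1 := by
    rw [hζdef, mul_pow, conj_omega_pow_d hd, one_mul, ← pow_mul, mul_comm (j : ℕ) d, pow_mul,
      omega_pow hd, one_pow]
  rw [sum_pow_fin d ζ hζd]
  have hcc : (starRingEnd ℂ) (omegaRoot d) ^ (i : ℕ) * omegaRoot d ^ (i : ℕ) = 1 := by
    rw [← mul_pow, conj_mul_omega, one_pow]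
  have hζ1 : ζ = 1 ↔ i = j := by
    constructor
    · intro h
      have h2 : omegaRoot d ^ (j : ℕ) = omegaRoot d ^ (i : ℕ) := by
        have := congrArg (· * omegaRoot d ^ (i : ℕ)) h
        simp only [hζdef, one_mul] at this
        calc omegaRoot d ^ (j : ℕ)
            = ((starRingEnd ℂ) (omegaRoot d) ^ (i : ℕ) * omegaRoot d ^ (i : ℕ)) *
                omegaRoot d ^ (j : ℕ) := by rw [hcc, one_mul]
          _ = ((starRingEnd ℂ) (omegaRoot d) ^ (i : ℕ) * omegaRoot d ^ (j : ℕ)) *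
                omegaRoot d ^ (i : ℕ) := by ring
          _ = omegaRoot d ^ (i : ℕ) := by rw [← hζdef, h, one_mul]
      exact (Fin.ext ((omega_prim hd).pow_inj j.isLt i.isLt h2)).symm
    · rintro rfl
      rw [hζdef, ← mul_pow, conj_mul_omega, one_pow]
  split_ifs with h h' h'
  · rw [← hsd]
    field_simp
  · rw [hζ1] at h; exact absurd h h'
  · rw [← hζ1] at h'; exact absurd h' h
  · simp

lemma conj_conj_omega_pow (a : ℕ) :
    (starRingEnd ℂ) ((starRingEnd ℂ) (omegaRoot d) ^ a) = omegaRoot d ^ a := by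
  rw [map_pow, Complex.conj_conj]

end Aux

theorem stmt_0 (d : ℕ) (hd : 1 ≤ d) (v : EuclideanSpace ℂ (Fin d)) (hv : ‖v‖ = 1)
    (hub : ∀ j : Fin d, ‖⟪fourierVec d j, v⟫‖ ^ 2 = 1 / d) :
    (∃ B : OrthonormalBasis (Fin d) ℂ (EuclideanSpace ℂ (Fin d)),
        ∀ k : Fin d, B k = cyclicShift k v) ∧
      ∀ (j k : Fin d), ‖⟪fourierVec d j, cyclicShift k v⟫‖ ^ 2 = 1 / d := by
  haveI : NeZero d := ⟨by omega⟩
  have hdC : (d : ℂ) ≠ 0 := by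
    simp only [ne_eq, Nat.cast_eq_zero]; omega
  -- Fourier orthonormal basis
  have hcard : Fintype.card (Fin d) = Module.finrank ℂ (EuclideanSpace ℂ (Fin d)) := by
    simp
  have hFon := fourier_orthonormal (d := d) hd
  have hFsp : ⊤ ≤ Submodule.span ℂ (Set.range (fourierVec d)) :=
    (hFon.linearIndependent.span_eq_top_of_card_eq_finrank hcard).ge
  set F : OrthonormalBasis (Fin d) ℂ (EuclideanSpace ℂ (Fin d)) :=
    OrthonormalBasis.mk hFon hFsp with hFdef
  have hF : ∀ j : Fin d, F j = fourierVec d j := by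
    intro j; exact congrFun (OrthonormalBasis.coe_mk hFon hFsp) j
  -- product of conjugate inner products
  have hcc : ∀ j : Fin d,
      (starRingEnd ℂ) ⟪fourierVec d j, v⟫ * ⟪fourierVec d j, v⟫ = (d : ℂ)⁻¹ := by
    intro j
    rw [mul_comm, Complex.mul_conj, Complex.normSq_eq_norm_sq, hub j]
    push_cast
    ring
  -- orthonormality of shifts
  have hon : Orthonormal ℂ (fun k : Fin d => cyclicShift k v) := by
    rw [orthonormal_iff_ite]
    intro k l
    rw [← F.sum_inner_mul_inner (cyclicShift k v) (cyclicShift l v)]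
    set ζ : ℂ := omegaRoot d ^ (k : ℕ) * (starRingEnd ℂ) (omegaRoot d) ^ (l : ℕ) with hζdef
    have hterm : ∀ j : Fin d,
        ⟪cyclicShift k v, F j⟫ * ⟪F j, cyclicShift l v⟫ = ζ ^ (j : ℕ) * (d : ℂ)⁻¹ := by
      intro j
      rw [← inner_conj_symm (cyclicShift k v) (F j), hF j,
        fourier_inner_shift hd j k v, fourier_inner_shift hd j l v, map_mul,
        map_pow, map_pow, Complex.conj_conj]
      calc (omegaRoot d ^ (j : ℕ)) ^ (k : ℕ) * (starRingEnd ℂ) ⟪fourierVec d j, v⟫ *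
            (((starRingEnd ℂ) (omegaRoot d) ^ (j : ℕ)) ^ (l : ℕ) * ⟪fourierVec d j, v⟫)
          = (omegaRoot d ^ (j : ℕ)) ^ (k : ℕ) *
              ((starRingEnd ℂ) (omegaRoot d) ^ (j : ℕ)) ^ (l : ℕ) *
              ((starRingEnd ℂ) ⟪fourierVec d j, v⟫ * ⟪fourierVec d j, v⟫) := by ring
        _ = ζ ^ (j : ℕ) * (d : ℂ)⁻¹ := by
            rw [hcc j, hζdef, mul_pow, ← pow_mul, ← pow_mul, ← pow_mul, ← pow_mul,
              mul_comm ((j : ℕ)) ((k : ℕ)), mul_comm ((j : ℕ)) ((l : ℕ))]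
    rw [Finset.sum_congr rfl fun j _ => hterm j, ← Finset.sum_mul]
    have hζd : ζ ^ d = 1 := by
      rw [hζdef, mul_pow, conj_omega_pow_d hd, mul_one, ← pow_mul, mul_comm (k : ℕ) d,
        pow_mul, omega_pow hd, one_pow]
    rw [sum_pow_fin d ζ hζd]
    have hmc : (starRingEnd ℂ) (omegaRoot d) ^ (l : ℕ) * omegaRoot d ^ (l : ℕ) = 1 := by
      rw [← mul_pow, conj_mul_omega, one_pow]
    have hζ1 : ζ = 1 ↔ k = l := by
      constructor
      · intro h
        have h2 : omegaRoot d ^ (k : ℕ) = omegaRoot d ^ (l : ℕ) := by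
          calc omegaRoot d ^ (k : ℕ)
              = omegaRoot d ^ (k : ℕ) *
                  ((starRingEnd ℂ) (omegaRoot d) ^ (l : ℕ) * omegaRoot d ^ (l : ℕ)) := by
                rw [hmc, mul_one]
            _ = ζ * omegaRoot d ^ (l : ℕ) := by rw [hζdef]; ring
            _ = omegaRoot d ^ (l : ℕ) := by rw [h, one_mul]
        exact Fin.ext ((omega_prim hd).pow_inj k.isLt l.isLt h2)
      · rintro rfl
        rw [hζdef, ← mul_pow, mul_comm, conj_mul_omega, one_pow]
    split_ifs with h h' h'
    · rw [mul_inv_cancel₀ hdC]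
    · rw [hζ1] at h; exact absurd h h'
    · rw [← hζ1] at h'; exact absurd h' h
    · simp
  refine ⟨⟨OrthonormalBasis.mk hon
      ((hon.linearIndependent.span_eq_top_of_card_eq_finrank hcard).ge), fun k =>
        congrFun (OrthonormalBasis.coe_mk hon _) k⟩, ?_⟩
  intro j k
  rw [fourier_inner_shift hd j k v, norm_mul, norm_pow, norm_pow, Complex.norm_conj, abs_omega,
    one_pow, one_pow, one_mul, hub j]
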